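/- (Uniqueness of the formal solution of the one-dimensional Virasoro constraints.) Let s ∈ ℂ and let ρ(L_k) for k ≥ -1 be the operators on ℂ[[t_1,t_3,…]] given by ρ(L_{-1}) = s∂_{t_1} + (1/4)t_1² + Σ_j (j/2)t_{j+2}∂_{t_j}, ρ(L_0) = s∂_{t_3} + Σ_j (j/2)t_j∂_{t_j} + 1/16, ρ(L_k) = s∂_{t_{2k+3}} + (1/4)Σ_{j=1}^{2k-1}∂_{t_j}∂_{t_{2k-j}} + Σ_j (j/2)t_j∂_{t_{2k+j}} for k ≥ 1 (all indices j odd). If s = 0, then there is no τ ∈ ℂ[[t_1,t_3,…]] with τ(0) = 1 and ρ(L_k)τ = 0 for all k ≥ -1. If s ≠ 0, there is at most one such τ. -/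
import Mathlib


/-- The formal power series ring `ℂ[[t_1, t_3, t_5, …]]` (variables indexed by odd
positive integers, `n ↦ t_{2n+1}`), modelled via its coefficients: a series is a
function from monomials `ℕ →₀ ℕ` to `ℂ`. -/
abbrev FormalV : Type := (ℕ →₀ ℕ) → ℂ

/-- The derivative `∂_{t_{2n+1}}`, coefficientwise:
`(∂ f)(m) = (m(n) + 1) · f(m + e_n)`. -/
noncomputable def Dv (n : ℕ) : FormalV →ₗ[ℂ] FormalV where
  toFun f m := ((m n : ℕ) + 1 : ℂ) * f (m + Finsupp.single n 1)
  map_add' f g := by funext m; simp [mul_add]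
  map_smul' c f := by funext m; simp; ring

/-- The operator `t_{2a+1} ∂_{t_{2b+1}}`, coefficientwise. -/
noncomputable def XDv (a b : ℕ) : FormalV →ₗ[ℂ] FormalV where
  toFun f m :=
    if 1 ≤ m a then
      ((((m - Finsupp.single a 1 : ℕ →₀ ℕ) b : ℕ) : ℂ) + 1)
        * f (m - Finsupp.single a 1 + Finsupp.single b 1)
    else 0
  map_add' f g := by funext m; by_cases h : 1 ≤ m a <;> simp [h, mul_add]
  map_smul' c f := by funext m; by_cases h : 1 ≤ m a <;> simp [h] <;> ring

/-- Multiplication by `t_1²`, coefficientwise. -/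
noncomputable def Xsq : FormalV →ₗ[ℂ] FormalV where
  toFun f m := if 2 ≤ m 0 then f (m - Finsupp.single 0 2) else 0
  map_add' f g := by funext m; by_cases h : 2 ≤ m 0 <;> simp [h]
  map_smul' c f := by funext m; by_cases h : 2 ≤ m 0 <;> simp [h]

/-- The (locally finite) infinite sum `Σ_n c(n) · t_{2(a n)+1} ∂_{t_{2(b n)+1}}`,
well defined whenever `a n ≥ n` so that for a fixed monomial only finitely many
summands are nonzero. -/
noncomputable def sumXDv (a b : ℕ → ℕ) (c : ℕ → ℂ) : FormalV →ₗ[ℂ] FormalV where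
  toFun f m := ∑ n ∈ Finset.range (m.support.sup id + 1), c n * XDv (a n) (b n) f m
  map_add' f g := by
    funext m
    simp [map_add, Finset.sum_add_distrib, mul_add]
  map_smul' r f := by
    funext m
    simp [Finset.mul_sum]
    apply Finset.sum_congr rfl
    intros
    ring

/-- The Virasoro operators `ρ(L_k)`, `k ≥ -1`, of the one-dimensional situation
(equation (eq:rhoWK)):
`ρ(L_{-1}) = s ∂_{t_1} + (1/4) t_1² + Σ_{j odd} (j/2) t_{j+2} ∂_{t_j}`,
`ρ(L_0) = s ∂_{t_3} + Σ_{j odd} (j/2) t_j ∂_{t_j} + 1/16`, and for `k ≥ 1`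
`ρ(L_k) = s ∂_{t_{2k+3}} + (1/4) Σ_{j=1,odd}^{2k-1} ∂_{t_j} ∂_{t_{2k-j}}
 + Σ_{j odd} (j/2) t_j ∂_{t_{2k+j}}`. -/
noncomputable def rhoV (s : ℂ) (k : ℤ) : FormalV →ₗ[ℂ] FormalV :=
  if k = -1 then
    s • Dv 0 + ((1 : ℂ)/4) • Xsq
      + sumXDv (fun n => n + 1) (fun n => n) (fun n => ((2 * n + 1 : ℕ) : ℂ)/2)
  else if k = 0 then
    s • Dv 1 + sumXDv id id (fun n => ((2 * n + 1 : ℕ) : ℂ)/2)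
      + ((1 : ℂ)/16) • LinearMap.id
  else
    s • Dv (k.toNat + 1)
      + ((1 : ℂ)/4) • (∑ n ∈ Finset.range k.toNat, Dv n ∘ₗ Dv (k.toNat - 1 - n))
      + sumXDv id (fun n => n + k.toNat) (fun n => ((2 * n + 1 : ℕ) : ℂ)/2)


noncomputable def degV (m : ℕ →₀ ℕ) : ℕ := m.sum fun n k => (2*n+1)*k

lemma degV_add (a b : ℕ →₀ ℕ) : degV (a + b) = degV a + degV b :=
  Finsupp.sum_add_index' (fun n => by simp) (fun n x y => by ring)

lemma degV_single (n k : ℕ) : degV (Finsupp.single n k) = (2*n+1)*k :=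
  Finsupp.sum_single_index (by simp)

lemma degV_zero : degV 0 = 0 := Finsupp.sum_zero_index

lemma apply_le_degV (m : ℕ →₀ ℕ) (n : ℕ) : m n ≤ degV m := by
  refine le_trans (Nat.le_mul_of_pos_left (m n) (by omega : 0 < 2*n+1)) ?_
  by_cases h : n ∈ m.support
  · exact Finset.single_le_sum (f := fun i => (2*i+1)*m i) (fun i _ => Nat.zero_le _) h
  · simp [Finsupp.notMem_support_iff.mp h]

lemma degV_eq_zero {m : ℕ →₀ ℕ} (h : degV m = 0) : m = 0 := by
  ext n
  have := apply_le_degV m n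
  simp only [Finsupp.coe_zero, Pi.zero_apply]
  omega

lemma degV_mono {a b : ℕ →₀ ℕ} (h : a ≤ b) : degV a ≤ degV b := by
  obtain ⟨c, rfl⟩ := le_iff_exists_add.mp h
  rw [degV_add]; omega

lemma sub_single_add {m : ℕ →₀ ℕ} {n : ℕ} (h : 1 ≤ m n) :
    m - Finsupp.single n 1 + Finsupp.single n 1 = m :=
  tsub_add_cancel_of_le (Finsupp.single_le_iff.mpr h)

lemma degV_sub_single {m : ℕ →₀ ℕ} {n : ℕ} (h : 1 ≤ m n) :
    degV (m - Finsupp.single n 1) + (2*n+1) = degV m := by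
  conv_rhs => rw [← sub_single_add h]
  rw [degV_add, degV_single, mul_one]

lemma Dv_apply (n : ℕ) (f : FormalV) (m : ℕ →₀ ℕ) :
    Dv n f m = ((m n : ℕ) + 1 : ℂ) * f (m + Finsupp.single n 1) := rfl

lemma XDv_apply (a b : ℕ) (f : FormalV) (m : ℕ →₀ ℕ) :
    XDv a b f m = if 1 ≤ m a then
      ((((m - Finsupp.single a 1 : ℕ →₀ ℕ) b : ℕ) : ℂ) + 1)
        * f (m - Finsupp.single a 1 + Finsupp.single b 1)
    else 0 := rfl

lemma Xsq_apply (f : FormalV) (m : ℕ →₀ ℕ) :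
    Xsq f m = if 2 ≤ m 0 then f (m - Finsupp.single 0 2) else 0 := rfl

lemma sumXDv_apply (a b : ℕ → ℕ) (c : ℕ → ℂ) (f : FormalV) (m : ℕ →₀ ℕ) :
    sumXDv a b c f m
      = ∑ n ∈ Finset.range (m.support.sup id + 1), c n * XDv (a n) (b n) f m := rfl

lemma delta_zero (s : ℂ) (hs : s ≠ 0) (δ : FormalV) (h0 : δ 0 = 0)
    (hk : ∀ k : ℤ, -1 ≤ k → rhoV s k δ = 0) : δ = 0 := by
  have main : ∀ d, ∀ m : ℕ →₀ ℕ, degV m = d → δ m = 0 := by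
    intro d
    induction d using Nat.strong_induction_on with
    | _ d IH =>
    intro m hm
    rcases Nat.eq_zero_or_pos d with hd | hd
    · subst hd; rw [degV_eq_zero hm]; exact h0
    · have hmne : m ≠ 0 := by
        rintro rfl; rw [degV_zero] at hm; omega
      obtain ⟨n, hn⟩ := Finsupp.support_nonempty_iff.mpr hmne
      have hn1 : 1 ≤ m n := Nat.one_le_iff_ne_zero.mpr (Finsupp.mem_support_iff.mp hn)
      set m' := m - Finsupp.single n 1 with hm'
      have hadd : m' + Finsupp.single n 1 = m := sub_single_add hn1
      have hdeg' : degV m' + (2*n+1) = d := by rw [← hm]; exact degV_sub_single hn1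
      have hcoef : ((m' n : ℕ) + 1 : ℂ) ≠ 0 := by
        intro hE; exact Nat.succ_ne_zero (m' n) (by exact_mod_cast hE)
      match n, hadd, hdeg', hcoef with
      | 0, hadd, hdeg', hcoef =>
        have h : rhoV s (-1) δ m' = 0 := by rw [hk (-1) (by norm_num)]; rfl
        rw [rhoV, if_pos rfl] at h
        simp only [LinearMap.add_apply, Pi.add_apply, LinearMap.smul_apply,
          Pi.smul_apply, smul_eq_mul, Dv_apply, Xsq_apply, sumXDv_apply] at h
        rw [hadd] at h
        have hsum : ∀ x ∈ Finset.range (m'.support.sup id + 1),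
            (((2 * x + 1 : ℕ) : ℂ)/2) * XDv (x + 1) x δ m' = 0 := by
          intro x _
          rw [XDv_apply]
          rcases le_or_gt 1 (m' (x+1)) with hj | hj
          · rw [if_pos hj]
            have hz : δ (m' - Finsupp.single (x+1) 1 + Finsupp.single x 1) = 0 := by
              refine IH _ ?_ _ rfl
              have h1 := degV_sub_single hj
              rw [degV_add, degV_single]
              omega
            rw [hz, mul_zero, mul_zero]
          · rw [if_neg (by omega), mul_zero]
        rw [Finset.sum_eq_zero hsum] at h
        have hx : (if 2 ≤ m' 0 then δ (m' - Finsupp.single 0 2) else 0) = 0 := by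
          split
          · refine IH _ ?_ _ rfl
            have := degV_mono (tsub_le_self (a := m') (b := Finsupp.single 0 2))
            omega
          · rfl
        rw [hx] at h
        simp only [mul_zero, add_zero] at h
        rcases mul_eq_zero.mp h with h' | h'
        · exact absurd h' hs
        rcases mul_eq_zero.mp h' with h'' | h''
        · exact absurd h'' hcoef
        · exact h''
      | 1, hadd, hdeg', hcoef =>
        have h : rhoV s 0 δ m' = 0 := by rw [hk 0 (by norm_num)]; rfl
        rw [rhoV, if_neg (by norm_num), if_pos rfl] at h
        simp only [LinearMap.add_apply, Pi.add_apply, LinearMap.smul_apply,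
          Pi.smul_apply, smul_eq_mul, Dv_apply, sumXDv_apply, LinearMap.id_coe,
          id_eq] at h
        rw [hadd] at h
        have hm'0 : δ m' = 0 := IH _ (by omega) _ rfl
        have hsum : ∀ x ∈ Finset.range (m'.support.sup id + 1),
            (((2 * x + 1 : ℕ) : ℂ)/2) * XDv x x δ m' = 0 := by
          intro x _
          rw [XDv_apply]
          rcases le_or_gt 1 (m' x) with hj | hj
          · rw [if_pos hj]
            rw [sub_single_add hj, hm'0, mul_zero, mul_zero]
          · rw [if_neg (by omega), mul_zero]
        rw [Finset.sum_eq_zero hsum, hm'0] at h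
        simp only [mul_zero, add_zero] at h
        rcases mul_eq_zero.mp h with h' | h'
        · exact absurd h' hs
        rcases mul_eq_zero.mp h' with h'' | h''
        · exact absurd h'' hcoef
        · exact h''
      | (j+2), hadd, hdeg', hcoef =>
        have ht : (((j + 1 : ℕ) : ℤ)).toNat = j + 1 := by omega
        have h : rhoV s ((j + 1 : ℕ) : ℤ) δ m' = 0 := by
          rw [hk _ (by omega)]; rfl
        rw [rhoV, if_neg (by omega), if_neg (by omega), ht] at h
        simp only [LinearMap.add_apply, Pi.add_apply, LinearMap.smul_apply,
          Pi.smul_apply, smul_eq_mul, LinearMap.coe_sum, Finset.sum_apply,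
          Dv_apply, sumXDv_apply, id_eq] at h
        have hDv : ((j + 1) + 1) = j + 2 := rfl
        rw [hDv, hadd] at h
        have hsum2 : ∀ a ∈ Finset.range (j+1),
            ((Dv a ∘ₗ Dv (j + 1 - 1 - a)) δ) m' = 0 := by
          intro a ha
          have ha' : a < j + 1 := Finset.mem_range.mp ha
          simp only [LinearMap.comp_apply, Dv_apply]
          have hz : δ (m' + Finsupp.single a 1 + Finsupp.single (j + 1 - 1 - a) 1) = 0 := by
            refine IH _ ?_ _ rfl
            rw [degV_add, degV_add, degV_single, degV_single]
            omega
          rw [hz, mul_zero, mul_zero]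
        rw [Finset.sum_eq_zero hsum2] at h
        have hsum : ∀ x ∈ Finset.range (m'.support.sup id + 1),
            (((2 * x + 1 : ℕ) : ℂ)/2) * XDv x (x + (j + 1)) δ m' = 0 := by
          intro x _
          rw [XDv_apply]
          rcases le_or_gt 1 (m' x) with hj' | hj'
          · rw [if_pos hj']
            have hz : δ (m' - Finsupp.single x 1 + Finsupp.single (x + (j+1)) 1) = 0 := by
              refine IH _ ?_ _ rfl
              have h1 := degV_sub_single hj'
              rw [degV_add, degV_single]
              omega
            rw [hz, mul_zero, mul_zero]
          · rw [if_neg (by omega), mul_zero]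
        rw [Finset.sum_eq_zero hsum] at h
        simp only [mul_zero, add_zero] at h
        rcases mul_eq_zero.mp h with h' | h'
        · exact absurd h' hs
        rcases mul_eq_zero.mp h' with h'' | h''
        · exact absurd h'' hcoef
        · exact h''
  funext m
  exact main (degV m) m rfl

/-- Lemma 3.9 (lem:uniquenesTauVirasoro): if `s = 0` the Virasoro constraints
`ρ(L_k) τ = 0` (`k ≥ -1`) with `τ(0) = 1` have no solution in `ℂ[[t_1,t_3,…]]`;
if `s ≠ 0` they have at most one solution. -/
theorem virasoro_solution_unique (s : ℂ) :
    (s = 0 → ¬ ∃ τ : FormalV, τ 0 = 1 ∧ ∀ k : ℤ, -1 ≤ k → rhoV s k τ = 0) ∧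
    (s ≠ 0 → ∀ τ₁ τ₂ : FormalV,
      (τ₁ 0 = 1 ∧ ∀ k : ℤ, -1 ≤ k → rhoV s k τ₁ = 0) →
      (τ₂ 0 = 1 ∧ ∀ k : ℤ, -1 ≤ k → rhoV s k τ₂ = 0) →
      τ₁ = τ₂) := by
  constructor
  · rintro rfl ⟨τ, hτ0, hτ⟩
    have h := congrFun (hτ (-1) (by norm_num)) (Finsupp.single 0 2)
    rw [rhoV, if_pos rfl] at h
    simp only [LinearMap.add_apply, Pi.add_apply, LinearMap.smul_apply,
      Pi.smul_apply, smul_eq_mul, Dv_apply, Xsq_apply, sumXDv_apply, XDv_apply,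
      zero_mul, zero_add, Pi.zero_apply, Finsupp.single_apply,
      Finsupp.support_single_ne_zero 0 (two_ne_zero), Finset.sup_singleton,
      id_eq, Finset.sum_range_one, tsub_self, hτ0] at h
    norm_num at h
  · intro hs τ₁ τ₂ h1 h2
    obtain ⟨h10, h1k⟩ := h1
    obtain ⟨h20, h2k⟩ := h2
    have hz := delta_zero s hs (τ₁ - τ₂)
      (by simp [Pi.sub_apply, h10, h20])
      (fun k hk => by rw [map_sub, h1k k hk, h2k k hk, sub_zero])
    exact sub_eq_zero.mp hz
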